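/- Let G be an infinite, connected, locally finite simplicial graph with vertex set V, fix v₀ ∈ V, and let B_n be the closed ball of radius n about v₀. Then for every g : V → ℝ and every n ∈ ℕ there exists f : V → ℝ supported in B_n such that Δ_G(f)(v) = g(v) for all v ∈ B_n. -/
import Mathlib


open SimpleGraph

noncomputable def lap {V : Type*} (G : SimpleGraph V) [G.LocallyFinite] (f : V → ℝ) (v : V) : ℝ :=
  f v - (1 / (G.degree v : ℝ)) * ∑ w ∈ G.neighborFinset v, f w

lemma ball_finite {V : Type*} (G : SimpleGraph V) [G.LocallyFinite]
    (hconn : G.Connected) (v₀ : V) (n : ℕ) : {v | G.dist v₀ v ≤ n}.Finite := by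
  induction n with
  | zero =>
    apply Set.Finite.subset (Set.finite_singleton v₀)
    intro v hv
    simp only [Set.mem_setOf_eq, Nat.le_zero] at hv
    exact Set.mem_singleton_iff.2 ((hconn.dist_eq_zero_iff.mp hv)).symm
  | succ n ih =>
    apply Set.Finite.subset (ih.union (Set.Finite.biUnion ih
      (fun u _ => (G.neighborSet u).toFinite)))
    intro v hv
    simp only [Set.mem_setOf_eq] at hv
    by_cases h : G.dist v₀ v ≤ n
    · exact Or.inl h
    · have hne : G.dist v₀ v ≠ 0 := by omega
      have hvne : v₀ ≠ v := (SimpleGraph.dist_ne_zero_iff_ne_and_reachable.mp hne).1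
      obtain ⟨p, hp⟩ := SimpleGraph.exists_walk_of_dist_ne_zero hne
      have hq : ¬ p.reverse.Nil := SimpleGraph.Walk.not_nil_of_ne (Ne.symm hvne)
      refine Or.inr (Set.mem_biUnion (?_ : G.dist v₀ (p.reverse.getVert 1) ≤ n) ?_)
      · have h1 : G.dist (p.reverse.getVert 1) v₀ ≤ p.reverse.tail.length :=
          SimpleGraph.dist_le _
        have h2 : p.reverse.tail.length + 1 = p.reverse.length :=
          SimpleGraph.Walk.length_tail_add_one hq
        rw [SimpleGraph.Walk.length_reverse, hp] at h2
        rw [SimpleGraph.dist_comm]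
        omega
      · exact (p.reverse.adj_snd hq).symm

lemma degree_pos {V : Type*} [Infinite V] (G : SimpleGraph V) [G.LocallyFinite]
    (hconn : G.Connected) (v : V) : 0 < G.degree v := by
  rw [SimpleGraph.degree_pos_iff_exists_adj]
  obtain ⟨w, hw⟩ := exists_ne v
  obtain ⟨p⟩ := hconn v w
  have hnp : ¬ p.Nil := SimpleGraph.Walk.not_nil_of_ne (Ne.symm hw)
  exact ⟨p.getVert 1, p.adj_snd hnp⟩

lemma max_principle {V : Type*} [Infinite V] (G : SimpleGraph V) [G.LocallyFinite]
    (hconn : G.Connected) (S : Finset V) (F : V → ℝ)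
    (hsupp : ∀ v, F v ≠ 0 → v ∈ S) (hlap : ∀ v ∈ S, lap G F v = 0) (v : V) :
    F v ≤ 0 := by
  by_contra hv
  push_neg at hv
  have hvS : v ∈ S := hsupp v (by positivity)
  have hne : (S.image F).Nonempty := ⟨F v, Finset.mem_image_of_mem F hvS⟩
  set M := (S.image F).max' hne with hM
  have hMv : F v ≤ M := Finset.le_max' _ _ (Finset.mem_image_of_mem F hvS)
  have hMpos : 0 < M := lt_of_lt_of_le hv hMv
  have hle : ∀ u, F u ≤ M := by
    intro u
    by_cases hu : u ∈ S
    · exact Finset.le_max' _ _ (Finset.mem_image_of_mem F hu)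
    · have : F u = 0 := by
        by_contra h; exact hu (hsupp u h)
      rw [this]; exact le_of_lt hMpos
  -- closure under adjacency
  have closure : ∀ u, F u = M → ∀ w, G.Adj u w → F w = M := by
    intro u huM w hadj
    have huS : u ∈ S := hsupp u (by rw [huM]; exact ne_of_gt hMpos)
    have hdeg : 0 < G.degree u := degree_pos G hconn u
    have h0 := hlap u huS
    rw [lap, huM] at h0
    have hsum : ∑ x ∈ G.neighborFinset u, F x = (G.degree u : ℝ) * M := by
      have hd : (G.degree u : ℝ) ≠ 0 := Nat.cast_ne_zero.mpr hdeg.ne'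
      field_simp at h0
      linarith
    by_contra hwM
    have hwlt : F w < M := lt_of_le_of_ne (hle w) hwM
    have hlt : ∑ x ∈ G.neighborFinset u, F x < ∑ x ∈ G.neighborFinset u, M := by
      apply Finset.sum_lt_sum (fun i _ => hle i)
      exact ⟨w, (G.mem_neighborFinset u w).2 hadj, hwlt⟩
    rw [Finset.sum_const, nsmul_eq_mul] at hlt
    rw [hsum, SimpleGraph.card_neighborFinset_eq_degree] at hlt
    exact lt_irrefl _ hlt
  -- propagate along walks
  have step : ∀ {a b : V} (p : G.Walk a b), F a = M → F b = M := by
    intro a b p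
    induction p with
    | nil => exact id
    | cons h q ih => intro ha; exact ih (closure _ ha _ h)
  obtain ⟨u, hM', hFu⟩ := Finset.mem_image.1 ((S.image F).max'_mem hne)
  obtain ⟨w, hw⟩ := Infinite.exists_notMem_finset S
  obtain ⟨p⟩ := hconn u w
  have : F w = M := step p hFu
  have : F w = 0 := by
    by_contra h; exact hw (hsupp w h)
  linarith

lemma lap_add {V : Type*} (G : SimpleGraph V) [G.LocallyFinite] (f g : V → ℝ) (v : V) :
    lap G (f + g) v = lap G f v + lap G g v := by
  simp only [lap, Pi.add_apply, Finset.sum_add_distrib]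
  ring

lemma lap_smul {V : Type*} (G : SimpleGraph V) [G.LocallyFinite] (c : ℝ) (f : V → ℝ) (v : V) :
    lap G (c • f) v = c * lap G f v := by
  simp only [lap, Pi.smul_apply, smul_eq_mul, ← Finset.mul_sum]
  ring

theorem stmt10 {V : Type*} [Infinite V] (G : SimpleGraph V) [G.LocallyFinite]
    (hconn : G.Connected) (v₀ : V) (g : V → ℝ) (n : ℕ) :
    ∃ f : V → ℝ, (∀ v, f v ≠ 0 → G.dist v₀ v ≤ n) ∧
      ∀ v, G.dist v₀ v ≤ n → lap G f v = g v := by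
  classical
  have hfin := ball_finite G hconn v₀ n
  set S : Finset V := hfin.toFinset with hS
  have hmem : ∀ v, v ∈ S ↔ G.dist v₀ v ≤ n := fun v => hfin.mem_toFinset
  -- extension by zero
  let E : ({x // x ∈ S} → ℝ) →ₗ[ℝ] (V → ℝ) :=
    { toFun := fun f v => if h : v ∈ S then f ⟨v, h⟩ else 0
      map_add' := by
        intro f g; funext v; by_cases h : v ∈ S <;> simp [h]
      map_smul' := by
        intro c f; funext v; by_cases h : v ∈ S <;> simp [h] }
  let L : (V → ℝ) →ₗ[ℝ] (V → ℝ) :=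
    { toFun := lap G
      map_add' := by intro f g; funext v; exact lap_add G f g v
      map_smul' := by intro c f; funext v; exact lap_smul G c f v }
  let R : (V → ℝ) →ₗ[ℝ] ({x // x ∈ S} → ℝ) := LinearMap.funLeft ℝ ℝ Subtype.val
  let T := R ∘ₗ L ∘ₗ E
  have hTinj : Function.Injective T := by
    rw [← LinearMap.ker_eq_bot, LinearMap.ker_eq_bot']
    intro f hf
    have hsupp : ∀ v, E f v ≠ 0 → v ∈ S := by
      intro v hv
      by_contra h
      exact hv (by simp [E, h])
    have hlapz : ∀ v ∈ S, lap G (E f) v = 0 := by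
      intro v hvS
      have := congrFun hf ⟨v, hvS⟩
      simpa [T, R, L, LinearMap.funLeft] using this
    have h1 : ∀ v, E f v ≤ 0 := max_principle G hconn S (E f) hsupp hlapz
    have h2 : ∀ v, -(E f) v ≤ 0 := by
      apply max_principle G hconn S (-(E f))
      · intro v hv
        apply hsupp v; simpa using hv
      · intro v hvS
        have : -(E f) = (-1 : ℝ) • (E f) := by funext x; simp
        rw [this, lap_smul, hlapz v hvS]; ring
    funext k
    have h3 : E f k.val = 0 := le_antisymm (h1 k.val) (by simpa using h2 k.val)
    have : E f k.val = f k := by simp [E]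
    rw [this] at h3
    simpa using h3
  have hTsurj : Function.Surjective T := LinearMap.injective_iff_surjective.mp hTinj
  obtain ⟨f, hf⟩ := hTsurj (fun k => g k.val)
  refine ⟨E f, ?_, ?_⟩
  · intro v hv
    rw [← hmem]
    by_contra h
    exact hv (by simp [E, h])
  · intro v hv
    have hvS : v ∈ S := (hmem v).2 hv
    have := congrFun hf ⟨v, hvS⟩
    simpa [T, R, L, LinearMap.funLeft] using this
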